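/- For every real p with 2 < p < ∞ and every integer d ≥ 1, the Nikolskii constant satisfies 𝒞_{d,p} ≤ d·⌈p/2⌉ + 1; that is, ‖P‖_∞^p ≤ (d⌈p/2⌉+1)‖P‖_p^p for all polynomials P of degree at most d. -/

import Mathlib

noncomputable def supNorm (P : Polynomial ℂ) : ℝ :=
  ⨆ θ : ℝ, ‖P.eval (Complex.exp (θ * Complex.I))‖

noncomputable def pNormPow (p : ℝ) (P : Polynomial ℂ) : ℝ :=
  (1 / (2 * Real.pi)) *
    ∫ θ in (-Real.pi)..Real.pi, (‖P.eval (Complex.exp (θ * Complex.I))‖) ^ p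

open Complex Finset intervalIntegral MeasureTheory

noncomputable def fa (P : Polynomial ℂ) (θ : ℝ) : ℝ :=
  ‖P.eval (Complex.exp (θ * Complex.I))‖

lemma fa_nonneg (P : Polynomial ℂ) (θ : ℝ) : 0 ≤ fa P θ := norm_nonneg _

lemma fa_cont (P : Polynomial ℂ) : Continuous (fa P) :=
  continuous_norm.comp (P.continuous_aeval.comp (by fun_prop))

lemma fa_le (P : Polynomial ℂ) {n : ℕ} (hn : P.natDegree < n) (θ : ℝ) :
    fa P θ ≤ ∑ i ∈ range n, ‖P.coeff i‖ := by
  unfold fa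
  rw [Polynomial.eval_eq_sum_range' hn]
  refine le_trans (norm_sum_le _ _) (le_of_eq ?_)
  refine Finset.sum_congr rfl fun i _ => ?_
  rw [norm_mul, norm_pow, Complex.norm_exp_ofReal_mul_I, one_pow, mul_one]

lemma fa_bdd (P : Polynomial ℂ) : BddAbove (Set.range (fa P)) := by
  refine ⟨∑ i ∈ range (P.natDegree + 1), ‖P.coeff i‖, ?_⟩
  rintro x ⟨θ, rfl⟩
  exact fa_le P (Nat.lt_succ_self _) θ

lemma le_supNorm (P : Polynomial ℂ) (θ : ℝ) : fa P θ ≤ supNorm P :=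
  le_ciSup (fa_bdd P) θ

lemma supNorm_nonneg (P : Polynomial ℂ) : 0 ≤ supNorm P :=
  (fa_nonneg P 0).trans (le_supNorm P 0)

lemma supNorm_le (P : Polynomial ℂ) {c : ℝ} (h : ∀ θ, fa P θ ≤ c) : supNorm P ≤ c :=
  ciSup_le h

lemma intExp (m : ℤ) : ∫ θ in (-Real.pi)..Real.pi, Complex.exp (m * θ * Complex.I)
    = if m = 0 then (2 * Real.pi : ℂ) else 0 := by
  split_ifs with h
  · subst h
    simp only [Int.cast_zero, zero_mul, Complex.exp_zero]
    simp [intervalIntegral.integral_const, two_mul]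
  · have hc : (m : ℂ) * Complex.I ≠ 0 :=
      mul_ne_zero (Int.cast_ne_zero.2 h) Complex.I_ne_zero
    simp only [show ∀ θ : ℝ, (m : ℂ) * θ * Complex.I = (m * Complex.I) * θ from
      fun θ => by ring]
    rw [integral_exp_mul_complex hc]
    have w2 : Complex.exp ((m : ℂ) * Complex.I * (Real.pi : ℂ))
        * Complex.exp ((m : ℂ) * Complex.I * (Real.pi : ℂ)) = 1 := by
      rw [← Complex.exp_add, show (m : ℂ) * Complex.I * Real.pi + m * Complex.I * Real.pi
        = (m : ℂ) * (2 * Real.pi * Complex.I) by ring]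
      exact Complex.exp_int_mul_two_pi_mul_I m
    have hneg : Complex.exp ((m : ℂ) * Complex.I * ((-Real.pi : ℝ) : ℂ))
        = Complex.exp ((m : ℂ) * Complex.I * (Real.pi : ℂ)) := by
      rw [show ((m : ℂ) * Complex.I * ((-Real.pi : ℝ) : ℂ))
        = -((m : ℂ) * Complex.I * (Real.pi : ℂ)) by push_cast; ring,
        Complex.exp_neg, inv_eq_of_mul_eq_one_right w2]
    rw [hneg, sub_self, zero_div]

lemma parseval_aux (n : ℕ) (c : ℕ → ℂ) :
    ∫ θ in (-Real.pi)..Real.pi, ∑ j ∈ range n, ∑ k ∈ range n,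
        (c j * (starRingEnd ℂ) (c k)) * Complex.exp ((((j : ℤ) - (k : ℤ) : ℤ) : ℂ) * θ * Complex.I)
      = ((2 * Real.pi * ∑ j ∈ range n, ‖c j‖ ^ 2 : ℝ) : ℂ) := by
  have hint : ∀ (j k : ℕ), IntervalIntegrable
      (fun θ : ℝ => (c j * (starRingEnd ℂ) (c k)) * Complex.exp ((((j : ℤ) - (k : ℤ) : ℤ) : ℂ) * θ * Complex.I))
      volume (-Real.pi) Real.pi := fun j k =>
    (Continuous.mul continuous_const (by fun_prop)).intervalIntegrable _ _
  rw [intervalIntegral.integral_finset_sum (fun j _ =>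
    (Continuous.intervalIntegrable (by fun_prop) _ _))]
  have h3 : ∀ j ∈ range n, (∫ θ in (-Real.pi)..Real.pi, ∑ k ∈ range n,
        (c j * (starRingEnd ℂ) (c k)) * Complex.exp ((((j : ℤ) - (k : ℤ) : ℤ) : ℂ) * θ * Complex.I))
      = (2 * Real.pi : ℂ) * ((‖c j‖ ^ 2 : ℝ) : ℂ) := by
    intro j hj
    rw [intervalIntegral.integral_finset_sum (fun k _ => hint j k)]
    have h4 : ∀ k ∈ range n, (∫ θ in (-Real.pi)..Real.pi,
          (c j * (starRingEnd ℂ) (c k)) * Complex.exp ((((j : ℤ) - (k : ℤ) : ℤ) : ℂ) * θ * Complex.I))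
        = (c j * (starRingEnd ℂ) (c k)) * (if ((j : ℤ) - k) = 0 then (2 * Real.pi : ℂ) else 0) := by
      intro k _
      rw [intervalIntegral.integral_const_mul, intExp ((j : ℤ) - (k : ℤ))]
    rw [Finset.sum_congr rfl h4, Finset.sum_eq_single j]
    · simp only [sub_self, if_pos rfl]
      rw [Complex.mul_conj, ← Complex.sq_norm]
      push_cast
      ring
    · intro k _ hkj
      rw [if_neg (by omega), mul_zero]
    · intro hj'; exact absurd hj hj'
  rw [Finset.sum_congr rfl h3, ← Finset.mul_sum]
  push_cast
  ring

lemma parseval (P : Polynomial ℂ) {n : ℕ} (hn : P.natDegree < n) :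
    ∫ θ in (-Real.pi)..Real.pi, (fa P θ) ^ 2
      = 2 * Real.pi * ∑ j ∈ range n, ‖P.coeff j‖ ^ 2 := by
  have key : ∀ θ : ℝ, (((fa P θ) ^ 2 : ℝ) : ℂ)
      = ∑ j ∈ range n, ∑ k ∈ range n,
          (P.coeff j * (starRingEnd ℂ) (P.coeff k)) * Complex.exp ((((j : ℤ) - (k : ℤ) : ℤ) : ℂ) * θ * Complex.I) := by
    intro θ
    have hz : (((fa P θ) ^ 2 : ℝ) : ℂ)
        = P.eval (Complex.exp (θ * Complex.I)) * (starRingEnd ℂ) (P.eval (Complex.exp (θ * Complex.I))) := by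
      rw [Complex.mul_conj]
      unfold fa
      exact_mod_cast congrArg Complex.ofReal (Complex.sq_norm _)
    rw [hz, Polynomial.eval_eq_sum_range' hn, map_sum, Finset.sum_mul_sum]
    refine Finset.sum_congr rfl fun j _ => Finset.sum_congr rfl fun k _ => ?_
    rw [map_mul, map_pow, ← Complex.exp_conj]
    have hconj : (starRingEnd ℂ) ((θ : ℂ) * Complex.I) = -(θ * Complex.I) := by
      simp [Complex.conj_ofReal]
    rw [hconj, ← Complex.exp_nat_mul, ← Complex.exp_nat_mul]
    rw [show P.coeff j * Complex.exp ((j : ℂ) * (θ * Complex.I))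
        * ((starRingEnd ℂ) (P.coeff k) * Complex.exp ((k : ℂ) * -(θ * Complex.I)))
      = (P.coeff j * (starRingEnd ℂ) (P.coeff k))
        * (Complex.exp ((j : ℂ) * (θ * Complex.I)) * Complex.exp ((k : ℂ) * -(θ * Complex.I))) by ring,
      ← Complex.exp_add]
    congr 2
    push_cast
    ring
  have step : ((∫ θ in (-Real.pi)..Real.pi, (fa P θ) ^ 2 : ℝ) : ℂ)
      = ((2 * Real.pi * ∑ j ∈ range n, ‖P.coeff j‖ ^ 2 : ℝ) : ℂ) := by
    rw [← intervalIntegral.integral_ofReal]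
    calc ∫ θ in (-Real.pi)..Real.pi, (((fa P θ) ^ 2 : ℝ) : ℂ)
        = ∫ θ in (-Real.pi)..Real.pi, ∑ j ∈ range n, ∑ k ∈ range n,
            (P.coeff j * (starRingEnd ℂ) (P.coeff k))
              * Complex.exp ((((j : ℤ) - (k : ℤ) : ℤ) : ℂ) * θ * Complex.I) := by
          simp_rw [key]
      _ = _ := parseval_aux n P.coeff
  exact_mod_cast step
lemma pNormPow_two (P : Polynomial ℂ) {n : ℕ} (hn : P.natDegree < n) :
    pNormPow 2 P = ∑ j ∈ range n, ‖P.coeff j‖ ^ 2 := by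
  unfold pNormPow
  have h : ∀ θ : ℝ, (‖P.eval (Complex.exp (θ * Complex.I))‖) ^ (2 : ℝ)
      = fa P θ ^ 2 := by
    intro θ
    rw [show (2 : ℝ) = ((2 : ℕ) : ℝ) by norm_num, Real.rpow_natCast]
    rfl
  simp_rw [h]
  rw [parseval P hn]
  have hπ : (2 * Real.pi) ≠ 0 := by positivity
  field_simp

lemma pNormPow_nonneg (P : Polynomial ℂ) {p : ℝ} : 0 ≤ pNormPow p P := by
  unfold pNormPow
  have : 0 ≤ ∫ θ in (-Real.pi)..Real.pi,
      (‖P.eval (Complex.exp (θ * Complex.I))‖) ^ p :=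
    intervalIntegral.integral_nonneg (by linarith [Real.pi_pos])
      (fun u _ => Real.rpow_nonneg (norm_nonneg _) p)
  positivity

lemma nik2 (P : Polynomial ℂ) {m : ℕ} (hm : P.natDegree < m) :
    supNorm P ^ 2 ≤ m * pNormPow 2 P := by
  rw [pNormPow_two P hm]
  have h1 : supNorm P ≤ ∑ j ∈ range m, ‖P.coeff j‖ :=
    supNorm_le P (fa_le P hm)
  have h2 := sq_sum_le_card_mul_sum_sq (s := range m)
    (f := fun j => ‖P.coeff j‖)
  calc supNorm P ^ 2 ≤ (∑ j ∈ range m, ‖P.coeff j‖) ^ 2 :=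
        pow_le_pow_left₀ (supNorm_nonneg P) h1 2
    _ ≤ m * ∑ j ∈ range m, ‖P.coeff j‖ ^ 2 := by
        simpa [Finset.card_range] using h2

lemma fa_pow (P : Polynomial ℂ) (n : ℕ) (θ : ℝ) : fa (P ^ n) θ = fa P θ ^ n := by
  unfold fa
  rw [Polynomial.eval_pow, norm_pow]

lemma sup_pow_le (P : Polynomial ℂ) (n : ℕ) (hn : n ≠ 0) :
    supNorm P ^ n ≤ supNorm (P ^ n) := by
  have hTnn : 0 ≤ supNorm (P ^ n) := supNorm_nonneg _
  have key : ∀ θ, fa P θ ≤ (supNorm (P ^ n)) ^ ((n : ℝ)⁻¹) := by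
    intro θ
    have h1 : fa P θ ^ n ≤ supNorm (P ^ n) := by
      rw [← fa_pow]; exact le_supNorm _ θ
    calc fa P θ = (fa P θ ^ n) ^ ((n : ℝ)⁻¹) := by
          rw [← Real.rpow_natCast (fa P θ) n, ← Real.rpow_mul (fa_nonneg P θ),
            mul_inv_cancel₀ (by exact_mod_cast hn), Real.rpow_one]
      _ ≤ _ := Real.rpow_le_rpow (pow_nonneg (fa_nonneg P θ) n) h1 (by positivity)
  have h2 : supNorm P ≤ supNorm (P ^ n) ^ ((n : ℝ)⁻¹) := supNorm_le P key
  calc supNorm P ^ n ≤ (supNorm (P ^ n) ^ ((n : ℝ)⁻¹)) ^ n :=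
        pow_le_pow_left₀ (supNorm_nonneg P) h2 n
    _ = supNorm (P ^ n) := by
        rw [← Real.rpow_natCast (supNorm (P ^ n) ^ ((n : ℝ)⁻¹)) n,
          ← Real.rpow_mul hTnn, inv_mul_cancel₀ (by exact_mod_cast hn), Real.rpow_one]

lemma holder (P : Polynomial ℂ) {p : ℝ} (hp : 0 < p) {n : ℕ} (hpn : p ≤ 2 * n) :
    ∫ θ in (-Real.pi)..Real.pi, fa P θ ^ (2 * n)
      ≤ (∫ θ in (-Real.pi)..Real.pi, fa P θ ^ p) * supNorm P ^ (2 * (n : ℝ) - p) := by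
  have hab : (-Real.pi) ≤ Real.pi := by linarith [Real.pi_pos]
  have hMnn := supNorm_nonneg P
  have hexp : 0 ≤ 2 * (n : ℝ) - p := by linarith
  have hn0 : 2 * n ≠ 0 := by
    have h : (0 : ℝ) < 2 * (n : ℝ) := lt_of_lt_of_le hp hpn
    have : 0 < 2 * n := by exact_mod_cast h
    omega
  have pointwise : ∀ θ ∈ Set.Icc (-Real.pi) Real.pi,
      fa P θ ^ (2 * n) ≤ fa P θ ^ p * supNorm P ^ (2 * (n : ℝ) - p) := by
    intro θ _
    rcases eq_or_lt_of_le (fa_nonneg P θ) with h0 | h0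
    · rw [← h0, zero_pow hn0, Real.zero_rpow (ne_of_gt hp), zero_mul]
    · have e1 : fa P θ ^ (2 * n) = fa P θ ^ p * fa P θ ^ (2 * (n : ℝ) - p) := by
        rw [← Real.rpow_add h0, ← Real.rpow_natCast (fa P θ) (2 * n)]
        congr 1
        push_cast
        ring
      rw [e1]
      exact mul_le_mul_of_nonneg_left
        (Real.rpow_le_rpow (fa_nonneg P θ) (le_supNorm P θ) hexp)
        (Real.rpow_nonneg (fa_nonneg P θ) p)
  have int1 : IntervalIntegrable (fun θ => fa P θ ^ (2 * n)) volume (-Real.pi) Real.pi :=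
    ((fa_cont P).pow _).intervalIntegrable _ _
  have int2 : IntervalIntegrable (fun θ => fa P θ ^ p * supNorm P ^ (2 * (n : ℝ) - p))
      volume (-Real.pi) Real.pi :=
    (((fa_cont P).rpow_const (fun θ => Or.inr hp.le)).mul continuous_const).intervalIntegrable _ _
  calc ∫ θ in (-Real.pi)..Real.pi, fa P θ ^ (2 * n)
      ≤ ∫ θ in (-Real.pi)..Real.pi, fa P θ ^ p * supNorm P ^ (2 * (n : ℝ) - p) :=
        intervalIntegral.integral_mono_on hab int1 int2 pointwise
    _ = (∫ θ in (-Real.pi)..Real.pi, fa P θ ^ p) * supNorm P ^ (2 * (n : ℝ) - p) :=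
        intervalIntegral.integral_mul_const _ _

theorem stmt2 (p : ℝ) (hp : 2 < p) (d : ℕ) (hd : 1 ≤ d) :
    ∀ P : Polynomial ℂ, P.natDegree ≤ d →
      (supNorm P) ^ p ≤ ((d : ℝ) * (⌈p / 2⌉ : ℤ) + 1) * pNormPow p P := by
  intro P hP
  have hp0 : 0 < p := by linarith
  set n : ℕ := (⌈p / 2⌉).toNat with hndef
  have hceil1 : (1 : ℤ) < ⌈p / 2⌉ := Int.lt_ceil.mpr (by push_cast; linarith)
  have hncast : ((n : ℤ)) = ⌈p / 2⌉ := Int.toNat_of_nonneg (by omega)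
  have hn0 : n ≠ 0 := by omega
  have hnr : (n : ℝ) = ((⌈p / 2⌉ : ℤ) : ℝ) := by exact_mod_cast congrArg (Int.cast : ℤ → ℝ) hncast
  have hple : p ≤ 2 * n := by
    have h := Int.le_ceil (p / 2)
    rw [← hncast] at h
    push_cast at h
    linarith
  have hdeg : (P ^ n).natDegree < d * n + 1 := by
    rw [Polynomial.natDegree_pow]
    exact Nat.lt_succ_of_le (le_trans (Nat.mul_le_mul_left n hP) (le_of_eq (Nat.mul_comm n d)))
  have key := nik2 (P ^ n) hdeg
  have e1 : pNormPow 2 (P ^ n)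
      = (1 / (2 * Real.pi)) * ∫ θ in (-Real.pi)..Real.pi, fa P θ ^ (2 * n) := by
    unfold pNormPow
    congr 1
    refine intervalIntegral.integral_congr fun θ _ => ?_
    show (‖(P ^ n).eval (Complex.exp (θ * Complex.I))‖) ^ (2 : ℝ) = fa P θ ^ (2 * n)
    rw [show (2 : ℝ) = ((2 : ℕ) : ℝ) by norm_num, Real.rpow_natCast]
    have h2 : ‖(P ^ n).eval (Complex.exp (θ * Complex.I))‖ = fa P θ ^ n := fa_pow P n θ
    rw [h2, ← pow_mul, mul_comm n 2]
  set M := supNorm P with hM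
  have c1 : M ^ (2 * n) ≤ ((d * n + 1 : ℕ) : ℝ) * pNormPow 2 (P ^ n) := by
    calc M ^ (2 * n) = (M ^ n) ^ 2 := by rw [← pow_mul, mul_comm]
      _ ≤ supNorm (P ^ n) ^ 2 :=
          pow_le_pow_left₀ (pow_nonneg (supNorm_nonneg P) n) (sup_pow_le P n hn0) 2
      _ ≤ ((d * n + 1 : ℕ) : ℝ) * pNormPow 2 (P ^ n) := key
  have c2 : pNormPow 2 (P ^ n) ≤ pNormPow p P * M ^ (2 * (n : ℝ) - p) := by
    rw [e1]
    have h := holder P hp0 hple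
    have hc : (0 : ℝ) ≤ 1 / (2 * Real.pi) := by positivity
    calc (1 / (2 * Real.pi)) * ∫ θ in (-Real.pi)..Real.pi, fa P θ ^ (2 * n)
        ≤ (1 / (2 * Real.pi)) * ((∫ θ in (-Real.pi)..Real.pi, fa P θ ^ p)
            * supNorm P ^ (2 * (n : ℝ) - p)) := mul_le_mul_of_nonneg_left h hc
      _ = ((1 / (2 * Real.pi)) * ∫ θ in (-Real.pi)..Real.pi, fa P θ ^ p)
            * M ^ (2 * (n : ℝ) - p) := by rw [← hM]; ring
      _ = pNormPow p P * M ^ (2 * (n : ℝ) - p) := by rw [pNormPow]; rfl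
  have hconst : ((d * n + 1 : ℕ) : ℝ) = (d : ℝ) * (⌈p / 2⌉ : ℤ) + 1 := by
    push_cast
    rw [← hnr]
  rcases eq_or_lt_of_le (supNorm_nonneg P) with h0 | h0
  · have h0' : M = 0 := by rw [hM, ← h0]
    rw [h0', Real.zero_rpow hp0.ne']
    have hcpos : (0 : ℝ) ≤ (d : ℝ) * (⌈p / 2⌉ : ℤ) + 1 := by
      rw [← hconst]; positivity
    exact mul_nonneg hcpos (pNormPow_nonneg P)
  · have h0 : (0 : ℝ) < M := h0
    have hMq : 0 < M ^ (2 * (n : ℝ) - p) := Real.rpow_pos_of_pos h0 _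
    have expand : M ^ (2 * n) = M ^ p * M ^ (2 * (n : ℝ) - p) := by
      rw [← Real.rpow_add h0, ← Real.rpow_natCast M (2 * n)]
      congr 1
      push_cast
      ring
    have main : M ^ p * M ^ (2 * (n : ℝ) - p)
        ≤ (((d * n + 1 : ℕ) : ℝ) * pNormPow p P) * M ^ (2 * (n : ℝ) - p) := by
      rw [← expand]
      calc M ^ (2 * n) ≤ ((d * n + 1 : ℕ) : ℝ) * pNormPow 2 (P ^ n) := c1
        _ ≤ ((d * n + 1 : ℕ) : ℝ) * (pNormPow p P * M ^ (2 * (n : ℝ) - p)) :=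
            mul_le_mul_of_nonneg_left c2 (by positivity)
        _ = (((d * n + 1 : ℕ) : ℝ) * pNormPow p P) * M ^ (2 * (n : ℝ) - p) := by ring
    have := (mul_le_mul_iff_of_pos_right hMq).1 main
    rwa [hconst] at this
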